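/- The minimizer θ̂(x) of ½‖x − α‖₂² + f(α) over α ∈ Θ satisfies: ‖θ̂(x) − θ‖₂ maximizes over t ≥ 0 the function A_θ(t) := sup_{α∈Θ, ‖α−θ‖₂ ≤ t}(⟨x − θ, α − θ⟩ − f(α)) − t²/2. -/

import Mathlib

open Set

theorem stmt11 (n : ℕ) (Θ : Set (EuclideanSpace ℝ (Fin n)))
    (f : EuclideanSpace ℝ (Fin n) → ℝ)
    (hne : Θ.Nonempty) (hcl : IsClosed Θ) (hconv : Convex ℝ Θ) (hf : ConvexOn ℝ Θ f)
    (θ : EuclideanSpace ℝ (Fin n)) (hθ : θ ∈ Θ)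
    (x : EuclideanSpace ℝ (Fin n)) (θhatx : EuclideanSpace ℝ (Fin n))
    (hmem : θhatx ∈ Θ)
    (hmin : IsMinOn (fun α => ‖x - α‖ ^ 2 / 2 + f α) Θ θhatx) :
    IsMaxOn
      (fun t : ℝ =>
        sSup ((fun α => (inner ℝ (x - θ) (α - θ) : ℝ) - f α) '' {α ∈ Θ | ‖α - θ‖ ≤ t})
          - t ^ 2 / 2)
      (Set.Ici 0) ‖θhatx - θ‖ := by
  set h : EuclideanSpace ℝ (Fin n) → ℝ := fun α => (inner ℝ (x - θ) (α - θ) : ℝ) - f α with hh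
  have expand : ∀ α : EuclideanSpace ℝ (Fin n),
      ‖x - α‖ ^ 2 = ‖x - θ‖ ^ 2 - 2 * (inner ℝ (x - θ) (α - θ) : ℝ) + ‖α - θ‖ ^ 2 := by
    intro α
    have e : x - α = (x - θ) - (α - θ) := by abel
    rw [e, norm_sub_sq_real]
  have key : ∀ α ∈ Θ, h α - ‖α - θ‖ ^ 2 / 2 ≤ h θhatx - ‖θhatx - θ‖ ^ 2 / 2 := by
    intro α hα
    have hm := isMinOn_iff.mp hmin α hα
    have hm : ‖x - θhatx‖ ^ 2 / 2 + f θhatx ≤ ‖x - α‖ ^ 2 / 2 + f α := hm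
    have e1 := expand α
    have e2 := expand θhatx
    simp only [hh]
    nlinarith [hm, e1, e2]
  have bdd : ∀ t : ℝ, BddAbove (h '' {α ∈ Θ | ‖α - θ‖ ≤ t}) := by
    intro t
    refine ⟨h θhatx - ‖θhatx - θ‖ ^ 2 / 2 + t ^ 2 / 2, ?_⟩
    rintro y ⟨α, ⟨hα, hαt⟩, rfl⟩
    have h1 := key α hα
    have h2 : ‖α - θ‖ ^ 2 ≤ t ^ 2 := by
      have := norm_nonneg (α - θ)
      nlinarith
    linarith
  intro t ht
  have ht0 : (0 : ℝ) ≤ t := ht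
  have hne_t : (h '' {α ∈ Θ | ‖α - θ‖ ≤ t}).Nonempty :=
    ⟨h θ, ⟨θ, ⟨hθ, by simp [ht0]⟩, rfl⟩⟩
  have hA : sSup (h '' {α ∈ Θ | ‖α - θ‖ ≤ t})
      ≤ h θhatx - ‖θhatx - θ‖ ^ 2 / 2 + t ^ 2 / 2 := by
    refine csSup_le hne_t ?_
    rintro y ⟨α, ⟨hα, hαt⟩, rfl⟩
    have h1 := key α hα
    have h2 : ‖α - θ‖ ^ 2 ≤ t ^ 2 := by
      have := norm_nonneg (α - θ)
      nlinarith
    linarith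
  have hB : h θhatx ≤ sSup (h '' {α ∈ Θ | ‖α - θ‖ ≤ ‖θhatx - θ‖}) :=
    le_csSup (bdd _) ⟨θhatx, ⟨hmem, le_refl _⟩, rfl⟩
  simp only [mem_setOf_eq]
  show sSup (h '' {α ∈ Θ | ‖α - θ‖ ≤ t}) - t ^ 2 / 2
      ≤ sSup (h '' {α ∈ Θ | ‖α - θ‖ ≤ ‖θhatx - θ‖}) - ‖θhatx - θ‖ ^ 2 / 2
  have c1 : sSup (h '' {α ∈ Θ | ‖α - θ‖ ≤ t}) - t ^ 2 / 2
      ≤ h θhatx - ‖θhatx - θ‖ ^ 2 / 2 := by linarith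
  have c2 : h θhatx - ‖θhatx - θ‖ ^ 2 / 2
      ≤ sSup (h '' {α ∈ Θ | ‖α - θ‖ ≤ ‖θhatx - θ‖}) - ‖θhatx - θ‖ ^ 2 / 2 :=
    sub_le_sub_right hB _
  exact le_trans c1 c2
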